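/- For every positive integer n, the number of pairs (α, β), where α is a partition obtained from the staircase partition δ_n by adding one box (δ_n ⊆ α, |α| = |δ_n| + 1), β is a partition different from δ_n with |β| = |δ_n| and |β ∩ δ_n| = |δ_n| − 1, and α and β differ by one box, equals n(n−1). -/

import Mathlib

/-- A partition: a weakly decreasing finitely supported sequence of naturals. -/
def IsPartition (f : ℕ →₀ ℕ) : Prop := ∀ ⦃i j : ℕ⦄, i ≤ j → f j ≤ f i

/-- The size `|λ|` of a partition: the sum of its parts. -/
noncomputable def psize (f : ℕ →₀ ℕ) : ℕ := f.sum fun _ n => n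

/-- The intersection of two partitions: pointwise minimum. -/
noncomputable def pinter (f g : ℕ →₀ ℕ) : ℕ →₀ ℕ := Finsupp.zipWith min (min_self 0) f g

/-- Two partitions differ by one box: they are distinct and
`|λ ∩ μ| = max(|λ|,|μ|) − 1`. -/
noncomputable def DifferByOneBox (f g : ℕ →₀ ℕ) : Prop :=
  f ≠ g ∧ psize (pinter f g) + 1 = max (psize f) (psize g)

/-- The staircase partition `δ_n = (n, n−1, …, 2, 1)` (0-indexed). -/
noncomputable def staircase (n : ℕ) : ℕ →₀ ℕ :=
  Finsupp.onFinset (Finset.range n) (fun i => n - i)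
    (fun a ha => Finset.mem_range.mpr (Nat.lt_of_sub_ne_zero ha))

lemma staircase_apply (n i : ℕ) : staircase n i = n - i := rfl
lemma pinter_apply (f g : ℕ →₀ ℕ) (a : ℕ) : pinter f g a = min (f a) (g a) := rfl
lemma psize_def (f : ℕ →₀ ℕ) : psize f = ∑ i ∈ f.support, f i := rfl
lemma le_psize (f : ℕ →₀ ℕ) (a : ℕ) : f a ≤ psize f := by
  by_cases h : f a = 0
  · simp [h]
  · rw [psize_def]
    exact Finset.single_le_sum (fun i _ => Nat.zero_le _) (Finsupp.mem_support_iff.mpr h)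
lemma psize_add (f g : ℕ →₀ ℕ) : psize (f + g) = psize f + psize g :=
  Finsupp.sum_add_index' (fun _ => rfl) (fun _ _ _ => rfl)
lemma psize_single (j : ℕ) : psize (Finsupp.single j 1) = (1:ℕ) := by
  simp [psize, Finsupp.sum_single_index]
lemma psize_eq_zero {f : ℕ →₀ ℕ} (h : psize f = 0) : f = 0 := by
  ext a
  simp only [Finsupp.coe_zero, Pi.zero_apply]
  have := le_psize f a
  omega
lemma psize_eq_one {d : ℕ →₀ ℕ} (h : psize d = 1) : ∃ j, d = Finsupp.single j 1 := by
  have hne : d ≠ 0 := by rintro rfl; simp [psize] at h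
  obtain ⟨j, hj⟩ := Finsupp.support_nonempty_iff.mpr hne
  refine ⟨j, ?_⟩
  have hdj : 1 ≤ d j := Nat.one_le_iff_ne_zero.mpr (Finsupp.mem_support_iff.mp hj)
  have hle := le_psize d j
  have hdj1 : d j = 1 := le_antisymm (h ▸ hle) hdj
  ext a
  rcases eq_or_ne a j with rfl | hne'
  · simpa [Finsupp.single_apply] using hdj1
  · rw [Finsupp.single_apply, if_neg (fun hja => hne' hja.symm)]
    by_contra ha
    have ha1 : 1 ≤ d a := Nat.one_le_iff_ne_zero.mpr ha
    have hsub : ({j, a} : Finset ℕ) ⊆ d.support := by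
      intro x hx
      simp only [Finset.mem_insert, Finset.mem_singleton] at hx
      rcases hx with rfl | rfl <;> simp [Finsupp.mem_support_iff] <;> omega
    have hsum : ∑ i ∈ ({j, a} : Finset ℕ), d i ≤ psize d := by
      rw [psize_def]
      exact Finset.sum_le_sum_of_subset hsub
    rw [Finset.sum_pair (fun hja => hne' hja.symm)] at hsum
    omega
lemma eq_add_single {f g : ℕ →₀ ℕ} (hle : ∀ a, f a ≤ g a) (hs : psize g = psize f + 1) :
    ∃ j, g = f + Finsupp.single j 1 := by
  have h1 : f + (g - f) = g := add_tsub_cancel_of_le (Finsupp.le_def.mpr hle)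
  have h2 : psize (g - f) = 1 := by
    have := psize_add f (g - f); rw [h1] at this; omega
  obtain ⟨j, hj⟩ := psize_eq_one h2
  exact ⟨j, by rw [← h1, hj]⟩
lemma eq_of_le_psize {f g : ℕ →₀ ℕ} (hle : ∀ a, f a ≤ g a) (hs : psize g = psize f) : g = f := by
  have h1 : f + (g - f) = g := add_tsub_cancel_of_le (Finsupp.le_def.mpr hle)
  have h2 : psize (g - f) = 0 := by
    have := psize_add f (g - f); rw [h1] at this; omega
  rw [← h1, psize_eq_zero h2, add_zero]

/-- the number of pairs `(α, β)` with `α` obtained from `δ_n` by adding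
a box, `β` obtained from `δ_n` by moving a box, which differ by one box, is `n(n−1)`. -/
theorem staircase_add_move_pairs (n : ℕ) (hn : 0 < n) :
    {p : (ℕ →₀ ℕ) × (ℕ →₀ ℕ) | IsPartition p.1 ∧ IsPartition p.2 ∧
      (∀ i, staircase n i ≤ p.1 i) ∧ psize p.1 = psize (staircase n) + 1 ∧
      p.2 ≠ staircase n ∧ psize p.2 = psize (staircase n) ∧
      psize (pinter p.2 (staircase n)) + 1 = psize (staircase n) ∧
      DifferByOneBox p.1 p.2}.ncard = n * (n - 1) := by
  classical
  set S : Finset (ℕ × ℕ) :=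
    (Finset.range n ×ˢ Finset.range (n+1)).filter fun q => q.2 ≠ q.1 ∧ q.2 ≠ q.1 + 1 with hS
  set F : ℕ × ℕ → (ℕ →₀ ℕ) × (ℕ →₀ ℕ) := fun q =>
    (staircase n + Finsupp.single q.2 1,
     staircase n - Finsupp.single q.1 1 + Finsupp.single q.2 1) with hF
  have hβval : ∀ i j a : ℕ,
      ((staircase n - Finsupp.single i 1 + Finsupp.single j 1 : ℕ →₀ ℕ)) a
        = (n - a) - (if i = a then 1 else 0) + (if j = a then 1 else 0) := by
    intro i j a
    rw [Finsupp.add_apply, Finsupp.tsub_apply, Finsupp.single_apply, Finsupp.single_apply,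
      staircase_apply]
  have hαval : ∀ j a : ℕ,
      ((staircase n + Finsupp.single j 1 : ℕ →₀ ℕ)) a = (n - a) + (if j = a then 1 else 0) := by
    intro j a
    rw [Finsupp.add_apply, Finsupp.single_apply, staircase_apply]
  have hsingle_le : ∀ i : ℕ, i < n → Finsupp.single i 1 ≤ staircase n := by
    intro i hi
    refine Finsupp.le_def.mpr fun a => ?_
    rw [Finsupp.single_apply, staircase_apply]
    split_ifs with h
    · omega
    · exact Nat.zero_le _
  have hrec : ∀ i : ℕ, i < n → staircase n - Finsupp.single i 1 + Finsupp.single i 1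
      = staircase n := fun i hi => tsub_add_cancel_of_le (hsingle_le i hi)
  have hδsize : ∀ i : ℕ, i < n →
      psize (staircase n - Finsupp.single i 1) + 1 = psize (staircase n) := by
    intro i hi
    conv_rhs => rw [← hrec i hi]
    rw [psize_add, psize_single]
  have key : {p : (ℕ →₀ ℕ) × (ℕ →₀ ℕ) | IsPartition p.1 ∧ IsPartition p.2 ∧
      (∀ i, staircase n i ≤ p.1 i) ∧ psize p.1 = psize (staircase n) + 1 ∧
      p.2 ≠ staircase n ∧ psize p.2 = psize (staircase n) ∧
      psize (pinter p.2 (staircase n)) + 1 = psize (staircase n) ∧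
      DifferByOneBox p.1 p.2} = F '' ↑S := by
    ext p
    simp only [Set.mem_setOf_eq, Set.mem_image, Finset.mem_coe, hS, Finset.mem_filter,
      Finset.mem_product, Finset.mem_range]
    constructor
    · rintro ⟨hP1, hP2, hle, hsz1, hne, hsz2, hint, hd⟩
      obtain ⟨hne', hdsz⟩ := hd
      -- α = δ + single k 1
      obtain ⟨k, hk⟩ := eq_add_single hle hsz1
      -- m = pinter p.2 δ
      have hm2 : ∀ a, pinter p.2 (staircase n) a ≤ p.2 a := fun a => min_le_left _ _
      have hmδ : ∀ a, pinter p.2 (staircase n) a ≤ staircase n a := fun a => min_le_right _ _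
      obtain ⟨i, hi⟩ := eq_add_single hmδ (by omega)
      obtain ⟨j, hj⟩ := eq_add_single hm2 (by omega)
      have hij : j ≠ i := by
        rintro rfl
        exact hne (hj.trans hi.symm)
      -- from DifferByOneBox: p.2 ≤ p.1
      have hmax : psize (pinter p.1 p.2) = psize p.2 := by
        rw [hsz1, hsz2, max_eq_left (by omega : psize (staircase n) ≤ psize (staircase n) + 1)]
          at hdsz
        omega
      have hple : ∀ a, p.2 a ≤ p.1 a := by
        have h12 : p.2 = pinter p.1 p.2 :=
          eq_of_le_psize (fun a => min_le_right _ _) hmax.symm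
        intro a
        conv_lhs => rw [h12]
        exact min_le_left _ _
      -- k = j
      have hmj : pinter p.2 (staircase n) j + 1 ≤ staircase n j + Finsupp.single k 1 j := by
        have h1 : p.2 j = pinter p.2 (staircase n) j + 1 := by
          have := DFunLike.congr_fun hj j
          rw [Finsupp.add_apply, Finsupp.single_apply, if_pos rfl] at this
          exact this
        have h2 := hple j
        rw [h1, hk, Finsupp.add_apply] at h2
        exact h2
      have hδj : staircase n j = pinter p.2 (staircase n) j := by
        have := DFunLike.congr_fun hi j
        rw [Finsupp.add_apply, Finsupp.single_apply, if_neg (fun h => hij h.symm),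
          add_zero] at this
        exact this
      have hkj : k = j := by
        by_contra hkj
        rw [← hδj, Finsupp.single_apply, if_neg hkj, add_zero] at hmj
        omega
      -- m = δ - single i 1
      have hmval : pinter p.2 (staircase n) = staircase n - Finsupp.single i 1 := by
        ext a
        have := DFunLike.congr_fun hi a
        rw [Finsupp.add_apply] at this
        rw [Finsupp.tsub_apply]
        omega
      have hin : i < n := by
        have := DFunLike.congr_fun hi i
        rw [Finsupp.add_apply, Finsupp.single_apply, if_pos rfl, staircase_apply] at this
        omega
      have hp2 : p.2 = staircase n - Finsupp.single i 1 + Finsupp.single j 1 := by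
        rw [hj, hmval]
      have hjn : j < n + 1 := by
        by_contra hjn
        have h1 := hP2 (show n ≤ j by omega)
        rw [hp2, hβval, hβval] at h1
        split_ifs at h1 <;> omega
      have hji1 : j ≠ i + 1 := by
        rintro rfl
        have h1 := hP2 (show i ≤ i + 1 by omega)
        rw [hp2, hβval, hβval] at h1
        split_ifs at h1 <;> omega
      refine ⟨(i, j), ⟨⟨hin, hjn⟩, hij, hji1⟩, ?_⟩
      show (staircase n + Finsupp.single j 1,
        staircase n - Finsupp.single i 1 + Finsupp.single j 1) = p
      rw [← hp2, ← hkj, ← hk]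
    · rintro ⟨⟨i, j⟩, ⟨⟨hin, hjn⟩, hji, hji1⟩, rfl⟩
      dsimp only at hin hjn hji hji1
      simp only [hF]
      have hjn' : j ≤ n := by omega
      have hα : IsPartition (staircase n + Finsupp.single j 1) := by
        intro a b hab
        rw [hαval, hαval]
        split_ifs <;> omega
      have hβ : IsPartition (staircase n - Finsupp.single i 1 + Finsupp.single j 1) := by
        intro a b hab
        rw [hβval, hβval]
        split_ifs <;> omega
      have hαsz : psize (staircase n + Finsupp.single j 1) = psize (staircase n) + 1 := by
        rw [psize_add, psize_single]
      have hβsz : psize (staircase n - Finsupp.single i 1 + Finsupp.single j 1)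
          = psize (staircase n) := by
        rw [psize_add, psize_single, hδsize i hin]
      have hpint : pinter (staircase n - Finsupp.single i 1 + Finsupp.single j 1) (staircase n)
          = staircase n - Finsupp.single i 1 := by
        ext a
        rw [pinter_apply, hβval, staircase_apply, Finsupp.tsub_apply, Finsupp.single_apply,
          staircase_apply]
        split_ifs <;> omega
      refine ⟨hα, hβ, ?_, hαsz, ?_, hβsz, ?_, ?_, ?_⟩
      · intro a
        rw [hαval, staircase_apply]
        omega
      · intro h
        have := DFunLike.congr_fun h i
        rw [hβval, staircase_apply, if_pos rfl, if_neg hji] at this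
        omega
      · rw [hpint, hδsize i hin]
      · intro h
        have := congrArg psize h
        rw [hαsz, hβsz] at this
        omega
      · have hbe : pinter (staircase n + Finsupp.single j 1)
            (staircase n - Finsupp.single i 1 + Finsupp.single j 1)
            = staircase n - Finsupp.single i 1 + Finsupp.single j 1 := by
          ext a
          rw [pinter_apply]
          refine min_eq_right ?_
          rw [hαval, hβval]
          split_ifs <;> omega
        rw [hbe, hβsz, hαsz]
        exact (max_eq_left (by omega)).symm
  rw [key]
  have hinj : Set.InjOn F ↑S := by
    intro q hq q' hq' hFq
    simp only [hS, Finset.coe_filter, Finset.mem_coe, Finset.mem_filter, Finset.mem_product,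
      Finset.mem_range, Set.mem_setOf_eq] at hq hq'
    have h1 := congrArg Prod.fst hFq
    have h2 := congrArg Prod.snd hFq
    simp only [hF] at h1 h2
    have hj : q.2 = q'.2 := by
      have := add_left_cancel h1
      exact Finsupp.single_left_injective one_ne_zero this
    have hi : q.1 = q'.1 := by
      rw [hj] at h2
      have h3 := add_right_cancel h2
      have h4 := DFunLike.congr_fun h3 q.1
      rw [Finsupp.tsub_apply, Finsupp.tsub_apply, Finsupp.single_apply, Finsupp.single_apply,
        staircase_apply, if_pos rfl] at h4
      rcases hq with ⟨⟨hq1, _⟩, _⟩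
      rcases hq' with ⟨⟨hq1', _⟩, _⟩
      split_ifs at h4 with h5
      · exact h5.symm
      · omega
    exact Prod.ext hi hj
  rw [Set.ncard_image_of_injOn hinj, Set.ncard_coe_finset]
  -- cardinality computation
  rw [hS]
  rw [Finset.card_eq_sum_card_fiberwise
    (f := Prod.fst) (t := Finset.range n)
    (fun x hx => by
      simp only [Finset.mem_coe, Finset.mem_filter, Finset.mem_product, Finset.mem_range] at hx
      exact Finset.mem_range.mpr hx.1.1)]
  have hfib : ∀ i ∈ Finset.range n,
      (((Finset.range n ×ˢ Finset.range (n+1)).filter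
        (fun q => q.2 ≠ q.1 ∧ q.2 ≠ q.1 + 1)).filter (fun x => x.1 = i)).card = n - 1 := by
    intro i hi
    rw [Finset.mem_range] at hi
    have himg : ((Finset.range n ×ˢ Finset.range (n+1)).filter
        (fun q => q.2 ≠ q.1 ∧ q.2 ≠ q.1 + 1)).filter (fun x => x.1 = i)
        = (Finset.range (n+1) \ {i, i+1}).image (fun j => (i, j)) := by
      ext ⟨a, b⟩
      simp only [Finset.mem_filter, Finset.mem_product, Finset.mem_range, Finset.mem_image,
        Finset.mem_sdiff, Finset.mem_insert, Finset.mem_singleton, Prod.mk.injEq]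
      constructor
      · rintro ⟨⟨⟨_, hb⟩, hba, hba1⟩, rfl⟩
        exact ⟨b, ⟨hb, by omega⟩, rfl, rfl⟩
      · rintro ⟨j, ⟨hjn2, hj2⟩, rfl, rfl⟩
        exact ⟨⟨⟨hi, hjn2⟩, by omega, by omega⟩, rfl⟩
    rw [himg, Finset.card_image_of_injective _ (fun a b hab => (Prod.mk.injEq _ _ _ _ ▸ hab).2),
      Finset.card_sdiff_of_subset (by
        intro x hx
        simp only [Finset.mem_insert, Finset.mem_singleton] at hx
        rcases hx with rfl | rfl <;> exact Finset.mem_range.mpr (by omega))]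
    rw [Finset.card_range]
    rw [Finset.card_insert_of_notMem (by simp), Finset.card_singleton]
    omega
  rw [Finset.sum_congr rfl hfib, Finset.sum_const, Finset.card_range, smul_eq_mul]
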